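/- Let a_0, a_1 : ℕ → ℝ and ε_0, ε_1 : ℕ → ℝ be sequences satisfying, for all n ≥ 1 and i ∈ {0,1}, the recurrence a_i(n) = E[a_0(I_n^i)] + E[a_1(n − I_n^i)] + ε_i(n), where I_n^i is a binomial B(n, p_{i0}) random variable. If ε_i(n) = c_i n + O(n^α) as n → ∞ for constants c_0, c_1 ∈ ℝ and some α < 1, for both i ∈ {0,1}, then a_i(n) = ((π_0 c_0 + π_1 c_1)/H) · n log n + O(n) as n → ∞, for both i ∈ {0,1}. -/

import Mathlib

set_option maxHeartbeats 1000000

open Filter Asymptotics Real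
open scoped NNReal

/-- Expectation of `a` under the binomial distribution `B(n, p)`. -/
noncomputable def binomExp (p : ℝ) (n : ℕ) (a : ℕ → ℝ) : ℝ :=
  ∑ k ∈ Finset.range (n + 1), (n.choose k : ℝ) * p ^ k * (1 - p) ^ (n - k) * a k

namespace BinomAux

lemma binomExp_congr {p : ℝ} {n : ℕ} {f g : ℕ → ℝ} (h : ∀ k ≤ n, f k = g k) :
    binomExp p n f = binomExp p n g := by
  unfold binomExp
  refine Finset.sum_congr rfl fun k hk => ?_
  rw [h k (by simpa using Nat.lt_succ_iff.mp (Finset.mem_range.mp hk))]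

lemma binomExp_lincomb (p : ℝ) (n : ℕ) (u v : ℝ) (f g : ℕ → ℝ) :
    binomExp p n (fun k => u * f k + v * g k)
      = u * binomExp p n f + v * binomExp p n g := by
  simp only [binomExp, Finset.mul_sum, ← Finset.sum_add_distrib]
  exact Finset.sum_congr rfl fun k _ => by ring

lemma binomExp_one (p : ℝ) (n : ℕ) : binomExp p n (fun _ => 1) = 1 := by
  have h := add_pow p (1 - p) n
  simp only [add_sub_cancel, one_pow] at h
  unfold binomExp
  exact (Finset.sum_congr rfl fun k _ => by ring).trans h.symm

lemma binomExp_shift (p : ℝ) (n : ℕ) (f : ℕ → ℝ) :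
    binomExp p (n + 1) (fun k => (k : ℝ) * f k)
      = ((n : ℝ) + 1) * p * binomExp p n (fun j => f (j + 1)) := by
  unfold binomExp
  rw [Finset.sum_range_succ', Finset.mul_sum]
  simp only [Nat.cast_zero, zero_mul, mul_zero, add_zero]
  refine Finset.sum_congr rfl fun i hi => ?_
  have key : ((n + 1).choose (i + 1) : ℝ) * ((i : ℝ) + 1) = ((n : ℝ) + 1) * (n.choose i : ℝ) := by
    exact_mod_cast congrArg (Nat.cast (R := ℝ)) (Nat.add_one_mul_choose_eq n i).symm
  have hsub : n + 1 - (i + 1) = n - i := by omega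
  rw [hsub]
  push_cast
  linear_combination (p ^ (i + 1) * (1 - p) ^ (n - i) * f (i + 1)) * key

lemma binomExp_id (p : ℝ) (n : ℕ) : binomExp p n (fun k => (k : ℝ)) = n * p := by
  cases n with
  | zero => simp [binomExp]
  | succ m =>
    have := binomExp_shift p m (fun _ => 1)
    simp only [mul_one] at this
    rw [this, binomExp_one]
    push_cast; ring

lemma binomExp_sq (p : ℝ) (n : ℕ) :
    binomExp p n (fun k => (k : ℝ) * (k : ℝ)) = n * p * (((n : ℝ) - 1) * p + 1) := by
  cases n with
  | zero => simp [binomExp]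
  | succ m =>
    have h := binomExp_shift p m (fun k => (k : ℝ))
    have h2 : binomExp p m (fun j => ((j + 1 : ℕ) : ℝ))
        = binomExp p m (fun j => 1 * (j : ℝ) + 1 * 1) := by
      refine binomExp_congr fun k _ => by push_cast; ring
    rw [h, h2, binomExp_lincomb, binomExp_id, binomExp_one]
    push_cast; ring

lemma binomExp_var (p : ℝ) (n : ℕ) :
    binomExp p n (fun k => ((k : ℝ) - n * p) ^ 2) = n * p * (1 - p) := by
  have h : binomExp p n (fun k => ((k : ℝ) - n * p) ^ 2)
      = binomExp p n (fun k => 1 * ((k : ℝ) * (k : ℝ)) +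
          1 * ((-(2 * (n : ℝ) * p)) * (k : ℝ) + ((n : ℝ) * p) ^ 2 * 1)) := by
    refine binomExp_congr fun k _ => by ring
  rw [h, binomExp_lincomb, binomExp_lincomb, binomExp_sq, binomExp_id, binomExp_one]
  ring


lemma weight_nonneg {p : ℝ} (hp0 : 0 ≤ p) (hp1 : p ≤ 1) (n k : ℕ) :
    0 ≤ (n.choose k : ℝ) * p ^ k * (1 - p) ^ (n - k) := by
  have h1 : (0:ℝ) ≤ 1 - p := by linarith
  positivity

lemma binomExp_mono {p : ℝ} (hp0 : 0 ≤ p) (hp1 : p ≤ 1) {n : ℕ} {f g : ℕ → ℝ}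
    (h : ∀ k ≤ n, f k ≤ g k) : binomExp p n f ≤ binomExp p n g := by
  refine Finset.sum_le_sum fun k hk => ?_
  exact mul_le_mul_of_nonneg_left
    (h k (Nat.lt_succ_iff.mp (Finset.mem_range.mp hk))) (weight_nonneg hp0 hp1 n k)

lemma abs_binomExp_le {p : ℝ} (hp0 : 0 ≤ p) (hp1 : p ≤ 1) (n : ℕ) (f : ℕ → ℝ) :
    |binomExp p n f| ≤ binomExp p n (fun k => |f k|) := by
  refine (Finset.abs_sum_le_sum_abs _ _).trans (le_of_eq (Finset.sum_congr rfl fun k hk => ?_))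
  rw [abs_mul, abs_of_nonneg (weight_nonneg hp0 hp1 n k)]

lemma xlogx_tangent {m x : ℝ} (hm : 0 < m) (hx : 0 ≤ x) :
    m * Real.log m + (Real.log m + 1) * (x - m) ≤ x * Real.log x := by
  rcases eq_or_lt_of_le hx with rfl | hx
  · simp only [Real.log_zero, zero_mul, zero_sub]
    nlinarith
  · have h := Real.log_le_sub_one_of_pos (show 0 < m / x by positivity)
    rw [Real.log_div hm.ne' hx.ne'] at h
    have e2 := mul_le_mul_of_nonneg_left h hx.le
    have e3 : x * (m / x) = m := by field_simp
    nlinarith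

lemma xlogx_upper {m x : ℝ} (hm : 0 < m) (hx : 0 ≤ x) :
    x * Real.log x ≤ m * Real.log m + (Real.log m + 1) * (x - m) + (x - m) ^ 2 / m := by
  rcases eq_or_lt_of_le hx with rfl | hx
  · have h : (-m)^2 / m = m := by field_simp
    simp only [Real.log_zero, zero_mul, zero_sub]
    rw [h]; nlinarith
  · have h := Real.log_le_sub_one_of_pos (show 0 < x / m by positivity)
    rw [Real.log_div hx.ne' hm.ne'] at h
    have e2 := mul_le_mul_of_nonneg_left h hx.le
    have e3 : x * (x / m) = x ^ 2 / m := by field_simp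
    have e1 : (x - m) ^ 2 / m = x ^ 2 / m - 2 * x + m := by field_simp; ring
    nlinarith

lemma binomExp_linfun (p : ℝ) (n : ℕ) (u v : ℝ) :
    binomExp p n (fun k => u * (k : ℝ) + v) = u * (n * p) + v := by
  have h : (fun k : ℕ => u * (k : ℝ) + v) = fun k : ℕ => u * (k : ℝ) + v * 1 := by
    funext k; ring
  rw [h, binomExp_lincomb, binomExp_id, binomExp_one, mul_one]

lemma Elog_sandwich {p : ℝ} (hp0 : 0 < p) (hp1 : p < 1) {n : ℕ} (hn : 1 ≤ n) :
    (n : ℝ) * p * Real.log ((n : ℝ) * p) ≤ binomExp p n (fun k => (k : ℝ) * Real.log k) ∧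
    binomExp p n (fun k => (k : ℝ) * Real.log k)
      ≤ (n : ℝ) * p * Real.log ((n : ℝ) * p) + (1 - p) := by
  have hn0 : (0:ℝ) < n := by exact_mod_cast hn
  set m : ℝ := (n : ℝ) * p with hmdef
  have hm : 0 < m := by positivity
  constructor
  · have lin : binomExp p n (fun k => (Real.log m + 1) * (k : ℝ) +
        (m * Real.log m - (Real.log m + 1) * m)) = m * Real.log m := by
      rw [binomExp_linfun]; rw [hmdef]; ring
    rw [← lin]
    refine binomExp_mono hp0.le hp1.le fun k _ => ?_
    have := xlogx_tangent hm (Nat.cast_nonneg k : (0:ℝ) ≤ k)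
    linarith
  · have quad : binomExp p n (fun k => 1 * ((Real.log m + 1) * (k : ℝ) +
        (m * Real.log m - (Real.log m + 1) * m)) + (1/m) * ((k:ℝ) - n*p) ^ 2)
        = m * Real.log m + (1 - p) := by
      rw [binomExp_lincomb, binomExp_linfun, binomExp_var]
      rw [hmdef]; field_simp; ring
    rw [← quad]
    refine binomExp_mono hp0.le hp1.le fun k _ => ?_
    have := xlogx_upper hm (Nat.cast_nonneg k : (0:ℝ) ≤ k)
    have hmne : m ≠ 0 := hm.ne'
    have e : ((k:ℝ) - m) ^ 2 / m = (1/m) * ((k:ℝ) - n*p) ^ 2 := by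
      rw [hmdef]; ring
    linarith [e ▸ this]

lemma Elog_rev_sandwich {p : ℝ} (hp0 : 0 < p) (hp1 : p < 1) {n : ℕ} (hn : 1 ≤ n) :
    (n : ℝ) * (1-p) * Real.log ((n : ℝ) * (1-p))
        ≤ binomExp p n (fun k => ((n - k : ℕ) : ℝ) * Real.log ((n - k : ℕ))) ∧
    binomExp p n (fun k => ((n - k : ℕ) : ℝ) * Real.log ((n - k : ℕ)))
      ≤ (n : ℝ) * (1-p) * Real.log ((n : ℝ) * (1-p)) + p := by
  have hn0 : (0:ℝ) < n := by exact_mod_cast hn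
  set m : ℝ := (n : ℝ) * (1-p) with hmdef
  have hm : 0 < m := by have : 0 < 1 - p := by linarith
                        positivity
  have hcast : ∀ k ≤ n, ((n - k : ℕ) : ℝ) = (n : ℝ) - k := fun k hk => by
    push_cast [Nat.cast_sub hk]; ring
  constructor
  · have lin : binomExp p n (fun k => (-(Real.log m + 1)) * (k : ℝ) +
        (m * Real.log m + (Real.log m + 1) * ((n:ℝ) - m))) = m * Real.log m := by
      rw [binomExp_linfun]; rw [hmdef]; ring
    rw [← lin]
    refine binomExp_mono hp0.le hp1.le fun k hk => ?_
    have hx : (0:ℝ) ≤ ((n - k : ℕ) : ℝ) := Nat.cast_nonneg _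
    have := xlogx_tangent hm hx
    rw [hcast k hk] at this ⊢
    linarith
  · have quad : binomExp p n (fun k => 1 * ((-(Real.log m + 1)) * (k : ℝ) +
        (m * Real.log m + (Real.log m + 1) * ((n:ℝ) - m))) + (1/m) * ((k:ℝ) - n*p) ^ 2)
        = m * Real.log m + p := by
      rw [binomExp_lincomb, binomExp_linfun, binomExp_var]
      have hq1 : (1:ℝ) - p ≠ 0 := by linarith
      rw [hmdef]; field_simp; ring
    rw [← quad]
    refine binomExp_mono hp0.le hp1.le fun k hk => ?_
    have hx : (0:ℝ) ≤ ((n - k : ℕ) : ℝ) := Nat.cast_nonneg _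
    have hub := xlogx_upper hm hx
    rw [hcast k hk] at hub ⊢
    have e : ((n:ℝ) - k - m) ^ 2 = ((k:ℝ) - n*p) ^ 2 := by rw [hmdef]; ring
    rw [e] at hub
    have e2 : ((k:ℝ) - n*p) ^ 2 / m = (1/m) * ((k:ℝ) - n*p) ^ 2 := by ring
    linarith [hub.trans_eq (by rw [e2])]

lemma rpow_superadd {β x y : ℝ} (hβ0 : 0 ≤ β) (hβ1 : β ≤ 1) (hx : 0 ≤ x) (hy : 0 ≤ y) :
    (x + y) ^ β ≤ x ^ β + y ^ β := by
  lift x to ℝ≥0 using hx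
  lift y to ℝ≥0 using hy
  have h := NNReal.rpow_add_le_add_rpow x y hβ0 hβ1
  have := NNReal.coe_le_coe.mpr h
  push_cast [NNReal.coe_rpow] at this
  exact_mod_cast this

lemma core_t {β t ε' : ℝ} (hβ0 : 0 < β) (hβ1 : β < 1) (hε : 0 < ε')
    (ht1 : ε' ≤ t) (ht2 : t ≤ 1/2) :
    1 + ε' ^ β * (1 - 2 ^ (β - 1)) ≤ t ^ β + (1 - t) ^ β := by
  have ht0 : 0 < t := lt_of_lt_of_le hε ht1
  have h1t : (0:ℝ) ≤ 1 - t := by linarith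
  -- (1-t)^β ≥ 1 - t
  have hA : 1 - t ≤ (1 - t) ^ β := by
    rcases eq_or_lt_of_le h1t with h | h
    · rw [← h]; positivity
    · calc 1 - t = (1 - t) ^ (1:ℝ) := (Real.rpow_one _).symm
        _ ≤ (1 - t) ^ β := Real.rpow_le_rpow_of_exponent_ge h (by linarith) hβ1.le
  -- t^β - t ≥ ε'^β (1 - 2^(β-1))
  have hsplit : t ^ β - t = t ^ β * (1 - t ^ (1 - β)) := by
    have : t ^ β * t ^ (1 - β) = t := by
      rw [← Real.rpow_add ht0]; norm_num
    rw [mul_sub, mul_one, this]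
  have h2 : t ^ (1 - β) ≤ 2 ^ (β - 1) := by
    have : t ^ (1 - β) ≤ (1/2 : ℝ) ^ (1 - β) :=
      Real.rpow_le_rpow ht0.le ht2 (by linarith)
    calc t ^ (1-β) ≤ (1/2 : ℝ) ^ (1 - β) := this
      _ = 2 ^ (β - 1) := by
          rw [one_div, Real.inv_rpow (by norm_num : (0:ℝ) ≤ 2),
            ← Real.rpow_neg (by norm_num : (0:ℝ) ≤ 2), show -(1-β) = β - 1 by ring]
  have h3 : ε' ^ β ≤ t ^ β := Real.rpow_le_rpow hε.le ht1 hβ0.le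
  have h4 : (0:ℝ) ≤ 1 - 2 ^ (β - 1) := by
    have : (2:ℝ) ^ (β - 1) ≤ 2 ^ (0:ℝ) :=
      Real.rpow_le_rpow_of_exponent_le (by norm_num) (by linarith)
    simpa using this
  have h5 : ε' ^ β * (1 - 2 ^ (β - 1)) ≤ t ^ β * (1 - t ^ (1 - β)) := by
    have h6 : 1 - 2 ^ (β-1) ≤ 1 - t ^ (1-β) := by linarith
    have : (0:ℝ) ≤ ε' ^ β := by positivity
    nlinarith
  linarith [hsplit ▸ h5]


lemma gain {β ε' n x : ℝ} (hβ0 : 0 < β) (hβ1 : β < 1) (hε : 0 < ε') (hn : 0 < n)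
    (hx1 : ε' * n ≤ x) (hx2 : x ≤ n - ε' * n) :
    (1 + ε' ^ β * (1 - 2 ^ (β - 1))) * n ^ β ≤ x ^ β + (n - x) ^ β := by
  set t := x / n with htdef
  have hx0 : 0 < x := lt_of_lt_of_le (by positivity) hx1
  have ht1 : ε' ≤ t := (le_div_iff₀ hn).mpr hx1
  have ht2 : t ≤ 1 - ε' := by
    rw [htdef, div_le_iff₀ hn]; nlinarith
  have hxt : x = t * n := by rw [htdef]; field_simp
  have hnx : n - x = (1 - t) * n := by rw [hxt]; ring
  have hxpow : x ^ β = t ^ β * n ^ β := by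
    rw [hxt, Real.mul_rpow (by positivity) hn.le]
  have ht01 : 0 ≤ 1 - t := by linarith
  have hnxpow : (n - x) ^ β = (1 - t) ^ β * n ^ β := by
    rw [hnx, Real.mul_rpow ht01 hn.le]
  have hε2 : ε' ≤ 1/2 := by nlinarith
  have key : 1 + ε' ^ β * (1 - 2 ^ (β - 1)) ≤ t ^ β + (1 - t) ^ β := by
    rcases le_or_gt t (1/2) with h | h
    · exact core_t hβ0 hβ1 hε ht1 h
    · have := core_t hβ0 hβ1 hε (by linarith : ε' ≤ 1 - t) (by linarith : 1 - t ≤ 1/2)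
      have e : 1 - (1 - t) = t := by ring
      rw [e] at this
      linarith
  rw [hxpow, hnxpow]
  have hnβ : (0:ℝ) ≤ n ^ β := by positivity
  nlinarith

lemma binomExp_rpow_gain {p β : ℝ} (hp0 : 0 < p) (hp1 : p < 1) (hβ0 : 0 < β) (hβ1 : β < 1) :
    ∃ δ : ℝ, 0 < δ ∧ ∃ N : ℕ, 1 ≤ N ∧ ∀ n, N ≤ n →
      (1 + δ) * (n : ℝ) ^ β ≤ binomExp p n (fun k => (k : ℝ) ^ β + ((n - k : ℕ) : ℝ) ^ β) := by
  have hq0 : 0 < 1 - p := by linarith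
  set ε' : ℝ := min p (1 - p) / 2 with hεdef
  have hε : 0 < ε' := by
    have := lt_min hp0 hq0; positivity
  have hε'p : 2 * ε' ≤ p := by
    have := min_le_left p (1-p); rw [hεdef]; linarith
  have hε'q : 2 * ε' ≤ 1 - p := by
    have := min_le_right p (1-p); rw [hεdef]; linarith
  set δ0 : ℝ := ε' ^ β * (1 - 2 ^ (β - 1)) with hδ0def
  have h2lt : (2:ℝ) ^ (β - 1) < 1 := by
    have : (2:ℝ) ^ (β - 1) < 2 ^ (0:ℝ) :=
      Real.rpow_lt_rpow_of_exponent_lt (by norm_num) (by linarith)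
    simpa using this
  have hδ0 : 0 < δ0 := by
    have : (0:ℝ) < ε' ^ β := Real.rpow_pos_of_pos hε β
    nlinarith
  clear_value δ0 ε'
  refine ⟨δ0 / 2, by positivity, ⌈2 * p * (1 - p) / ε' ^ 2⌉₊ + 1, le_add_self, fun n hn => ?_⟩
  have hn1 : 1 ≤ n := le_trans le_add_self hn
  have hn0 : (0:ℝ) < n := by exact_mod_cast hn1
  have hnc : 2 * p * (1 - p) / ε' ^ 2 ≤ (n:ℝ) := by
    calc 2 * p * (1 - p) / ε' ^ 2 ≤ (⌈2 * p * (1 - p) / ε' ^ 2⌉₊ : ℝ) := Nat.le_ceil _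
      _ ≤ n := by exact_mod_cast le_trans (Nat.le_succ _) hn
  have hwpos : (0:ℝ) < (ε' * n) ^ 2 := by positivity
  have hnb : (0:ℝ) < (n:ℝ) ^ β := Real.rpow_pos_of_pos hn0 β
  -- pointwise bound
  have hpoint : ∀ k ≤ n,
      ((1 + δ0) * ((n:ℝ) ^ β)) * 1 + (-(δ0 * (n:ℝ) ^ β / (ε' * n) ^ 2)) * (((k:ℝ) - n * p) ^ 2)
        ≤ (k : ℝ) ^ β + ((n - k : ℕ) : ℝ) ^ β := by
    intro k hk
    have hcast : ((n - k : ℕ) : ℝ) = (n:ℝ) - k := by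
      push_cast [Nat.cast_sub hk]; ring
    have hbase : (n:ℝ) ^ β ≤ (k : ℝ) ^ β + ((n - k : ℕ) : ℝ) ^ β := by
      have hsum : (k:ℝ) + ((n - k : ℕ) : ℝ) = n := by rw [hcast]; ring
      calc (n:ℝ) ^ β = ((k:ℝ) + ((n - k : ℕ) : ℝ)) ^ β := by rw [hsum]
        _ ≤ _ := rpow_superadd hβ0.le hβ1.le (Nat.cast_nonneg k) (Nat.cast_nonneg _)
    have hsq : (0:ℝ) ≤ ((k:ℝ) - n * p) ^ 2 := sq_nonneg _
    have hc : (0:ℝ) ≤ δ0 * (n:ℝ) ^ β / (ε' * n) ^ 2 := by positivity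
    have hbad : ∀ _ : (ε' * n) ^ 2 ≤ ((k:ℝ) - n * p) ^ 2, ((1 + δ0) * ((n:ℝ) ^ β)) * 1 +
        (-(δ0 * (n:ℝ) ^ β / (ε' * n) ^ 2)) * (((k:ℝ) - n * p) ^ 2)
          ≤ (k : ℝ) ^ β + ((n - k : ℕ) : ℝ) ^ β := by
      intro hsqlb
      have h8 := mul_le_mul_of_nonneg_left hsqlb hc
      rw [div_mul_cancel₀ _ hwpos.ne'] at h8
      linarith
    rcases le_or_gt (ε' * n) (k:ℝ) with h1 | h1
    · rcases le_or_gt (k:ℝ) ((n:ℝ) - ε' * n) with h2 | h2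
      · have hg := gain hβ0 hβ1 hε hn0 h1 h2
        rw [hcast]
        have hT : (0:ℝ) ≤ δ0 * (n:ℝ) ^ β / (ε' * n) ^ 2 * (((k:ℝ) - n * p) ^ 2) :=
          mul_nonneg hc hsq
        rw [← hδ0def] at hg
        linarith
      · refine hbad ?_
        have h5 := mul_le_mul_of_nonneg_right hε'q hn0.le
        have h3 : ε' * n ≤ (k:ℝ) - n * p := by nlinarith
        exact pow_le_pow_left₀ (by positivity) h3 2
    · refine hbad ?_
      have h5 := mul_le_mul_of_nonneg_right hε'p hn0.le
      have h3 : ε' * n ≤ (n:ℝ) * p - k := by nlinarith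
      have h6 := pow_le_pow_left₀ (by positivity : (0:ℝ) ≤ ε' * n) h3 2
      have e : ((n:ℝ) * p - k) ^ 2 = ((k:ℝ) - n * p) ^ 2 := by ring
      rw [e] at h6
      exact h6
  have hmono := binomExp_mono (p := p) hp0.le hp1.le (n := n) hpoint
  rw [binomExp_lincomb, binomExp_one, binomExp_var] at hmono
  refine le_trans ?_ hmono
  have h1 : 2 * p * (1 - p) ≤ ε' ^ 2 * n := by
    rw [div_le_iff₀ (by positivity : (0:ℝ) < ε' ^ 2)] at hnc
    linarith
  have h7 : (n:ℝ) * p * (1 - p) ≤ (ε' * n) ^ 2 / 2 := by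
    have h2 := mul_le_mul_of_nonneg_left h1 hn0.le
    nlinarith
  have hc : (0:ℝ) ≤ δ0 * (n:ℝ) ^ β / (ε' * n) ^ 2 := by positivity
  have h8 := mul_le_mul_of_nonneg_left h7 hc
  have h9 : δ0 * (n:ℝ) ^ β / (ε' * n) ^ 2 * ((ε' * (n:ℝ)) ^ 2 / 2) = δ0 / 2 * (n:ℝ) ^ β := by
    field_simp
  rw [h9] at h8
  nlinarith [h8]


lemma binomExp_add (p : ℝ) (n : ℕ) (f g : ℕ → ℝ) :
    binomExp p n (fun k => f k + g k) = binomExp p n f + binomExp p n g := by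
  have := binomExp_lincomb p n 1 1 f g
  simpa using this

lemma binomExp_smul (p : ℝ) (n : ℕ) (c : ℝ) (f : ℕ → ℝ) :
    binomExp p n (fun k => c * f k) = c * binomExp p n f := by
  simp only [binomExp, Finset.mul_sum]
  exact Finset.sum_congr rfl fun k _ => by ring

lemma binomExp_ite_zero (p : ℝ) (n : ℕ) (c : ℝ) :
    binomExp p n (fun k => if k = 0 then c else 0) = (1 - p) ^ n * c := by
  unfold binomExp
  rw [Finset.sum_eq_single_of_mem 0 (by simp)]
  · simp
  · intro b _ hb; simp [hb]

lemma binomExp_ite_top (p : ℝ) (n : ℕ) (c : ℝ) :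
    binomExp p n (fun k => if k = n then c else 0) = p ^ n * c := by
  unfold binomExp
  rw [Finset.sum_eq_single_of_mem n (by simp)]
  · simp
  · intro b _ hb; simp [hb]

lemma binomExp_rev_id (p : ℝ) (n : ℕ) :
    binomExp p n (fun k => ((n - k : ℕ) : ℝ)) = (n : ℝ) - n * p := by
  have h : binomExp p n (fun k => ((n - k : ℕ) : ℝ))
      = binomExp p n (fun k => (-1) * (k : ℝ) + (n : ℝ)) := by
    refine binomExp_congr fun k hk => ?_
    push_cast [Nat.cast_sub hk]; ring
  rw [h, binomExp_linfun]; ring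

theorem core {P : Fin 2 → ℝ} (hP0 : ∀ i, 0 < P i) (hP1 : ∀ i, P i < 1)
    (f η : Fin 2 → ℕ → ℝ) (γ : ℝ) (hγ0 : 0 ≤ γ) (hγ1 : γ < 1)
    (A : ℝ) (hA : 0 ≤ A)
    (hrec : ∀ i n, 1 ≤ n → f i n
      = binomExp (P i) n (f 0) + binomExp (P i) n (fun k => f 1 (n - k)) + η i n)
    (hη : ∀ i n, 1 ≤ n → |η i n| ≤ A * (n : ℝ) ^ γ) :
    ∃ K : ℝ, ∀ i n, 1 ≤ n → |f i n| ≤ K * n := by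
  set β : ℝ := (γ + 1) / 2 with hβdef
  have hβ0 : 0 < β := by rw [hβdef]; linarith
  have hβ1 : β < 1 := by rw [hβdef]; linarith
  have hγβ : γ < β := by rw [hβdef]; linarith
  obtain ⟨δ₀, hδ₀, N₀, hN₀1, hgain₀⟩ := binomExp_rpow_gain (hP0 0) (hP1 0) hβ0 hβ1
  obtain ⟨δ₁, hδ₁, N₁, hN₁1, hgain₁⟩ := binomExp_rpow_gain (hP0 1) (hP1 1) hβ0 hβ1
  set δ : ℝ := min δ₀ δ₁ with hδdef
  have hδ : 0 < δ := lt_min hδ₀ hδ₁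
  have hgain : ∀ i : Fin 2, ∀ n, max N₀ N₁ ≤ n →
      (1 + δ) * (n : ℝ) ^ β ≤ binomExp (P i) n (fun k => (k : ℝ) ^ β + ((n - k : ℕ) : ℝ) ^ β) := by
    intro i n hn
    have hn0 : (0:ℝ) ≤ (n:ℝ) ^ β := by positivity
    fin_cases i
    · exact le_trans (by nlinarith [min_le_left δ₀ δ₁]) (hgain₀ n (le_trans (le_max_left _ _) hn))
    · exact le_trans (by nlinarith [min_le_right δ₀ δ₁]) (hgain₁ n (le_trans (le_max_right _ _) hn))
  set G : ℕ → ℝ := fun m => max |f 0 m| |f 1 m| with hGdef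
  have hGnn : ∀ m, 0 ≤ G m := fun m => le_trans (abs_nonneg _) (le_max_left _ _)
  have hfG : ∀ i : Fin 2, ∀ m, |f i m| ≤ G m := by
    intro i m; fin_cases i
    · exact le_max_left _ _
    · exact le_max_right _ _
  set B : ℝ := G 0 with hBdef
  have hB : 0 ≤ B := hGnn 0
  set ρ : ℝ := min (2 * P 0 * (1 - P 0)) (2 * P 1 * (1 - P 1)) with hρdef
  have hρ0 : 0 < ρ := by
    apply lt_min
    · have := hP0 0; have := hP1 0; nlinarith
    · have := hP0 1; have := hP1 1; nlinarith
  have hρ1 : ρ ≤ 1 := by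
    have h0 := hP0 0; have h1 := hP1 0
    have : 2 * P 0 * (1 - P 0) ≤ 1 := by nlinarith [sq_nonneg (2 * P 0 - 1)]
    exact le_trans (min_le_left _ _) this
  set N : ℕ := max (max N₀ N₁) 2 with hNdef
  set M : ℝ := (A + B + 1) / (δ * ρ) with hMdef
  have hM : 0 < M := by
    apply div_pos (by linarith) (by positivity)
  set K : ℝ := M + ∑ m ∈ Finset.range N, G m with hKdef
  have hsumG : 0 ≤ ∑ m ∈ Finset.range N, G m := Finset.sum_nonneg fun m _ => hGnn m
  have hKM : M ≤ K := by rw [hKdef]; linarith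
  clear_value δ G B ρ M K
  have hρle : ∀ j : Fin 2, ρ ≤ 2 * P j * (1 - P j) := by
    intro j
    rw [hρdef]
    fin_cases j
    · exact min_le_left _ _
    · exact min_le_right _ _
  -- the main induction
  have main : ∀ n : ℕ, 1 ≤ n → G n ≤ K * n - M * (n : ℝ) ^ β := by
    intro n
    induction n using Nat.strong_induction_on with
    | _ n IH =>
    intro hn1
    have hn0 : (0:ℝ) < n := by exact_mod_cast hn1
    have hnββ : (n:ℝ) ^ β ≤ (n:ℝ) := by
      calc (n:ℝ) ^ β ≤ (n:ℝ) ^ (1:ℝ) :=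
        Real.rpow_le_rpow_of_exponent_le (by exact_mod_cast hn1) hβ1.le
        _ = n := Real.rpow_one _
    have hnβ1 : (1:ℝ) ≤ (n:ℝ) ^ β := Real.one_le_rpow (by exact_mod_cast hn1) hβ0.le
    rcases lt_or_ge n N with hnN | hnN
    · -- base case
      have h1 : G n ≤ ∑ m ∈ Finset.range N, G m :=
        Finset.single_le_sum (fun m _ => hGnn m) (Finset.mem_range.mpr hnN)
      have hKM' : (0:ℝ) ≤ K - M := by linarith
      have h2 : M * (n:ℝ) ^ β ≤ M * n := mul_le_mul_of_nonneg_left hnββ hM.le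
      have h3 : (K - M) * 1 ≤ (K - M) * n := by
        apply mul_le_mul_of_nonneg_left _ hKM'
        exact_mod_cast hn1
      have h4 : G n ≤ K - M := by rw [hKdef]; linarith
      nlinarith
    · -- inductive step
      have hnN' : max N₀ N₁ ≤ n := le_trans (le_max_left _ _) hnN
      have hn2 : 2 ≤ n := le_trans (le_max_right _ _) hnN
      set ψn : ℝ := K * n - M * (n : ℝ) ^ β with hψndef
      rcases le_or_gt (G n) ψn with hdone | hD
      · exact hdone
      set D : ℝ := G n - ψn with hDdef
      have hD0 : 0 < D := by rw [hDdef]; linarith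
      clear_value ψn D
      -- per-component bound
      have hcomp : ∀ i : Fin 2, |f i n| ≤ K * n - M * (1 + δ) * (n:ℝ) ^ β
          + B + (1 - ρ) * D + A * (n:ℝ) ^ γ := by
        intro i
        obtain ⟨p, hpdef⟩ : ∃ p, p = P i := ⟨P i, rfl⟩
        have hp0 : 0 < p := hpdef ▸ hP0 i
        have hp1 : p < 1 := hpdef ▸ hP1 i
        have hq0 : (0:ℝ) < 1 - p := by linarith
        -- pointwise bounds
        have hpt1 : ∀ k ≤ n, |f 0 k| ≤ (K * (k:ℝ) + (-M) * (k:ℝ) ^ β)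
            + ((if k = 0 then B else 0) + (if k = n then D else 0)) := by
          intro k hk
          rcases eq_or_ne k 0 with rfl | hk0
          · have hne : (0:ℕ) ≠ n := by omega
            rw [if_pos rfl, if_neg hne]
            simp only [Nat.cast_zero]
            rw [Real.zero_rpow hβ0.ne']
            have hfB : |f 0 0| ≤ B := le_of_le_of_eq (hfG 0 0) hBdef.symm
            linarith
          · rcases eq_or_ne k n with rfl | hkn
            · rw [if_neg hk0, if_pos rfl]
              linarith [hfG 0 k, hDdef, hψndef]
            · rw [if_neg hk0, if_neg hkn]
              have hk1 : 1 ≤ k := Nat.one_le_iff_ne_zero.mpr hk0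
              have hkln : k < n := lt_of_le_of_ne hk hkn
              linarith [IH k hkln hk1, hfG 0 k]
        have hpt2 : ∀ k ≤ n, |f 1 (n - k)| ≤ (K * ((n - k : ℕ):ℝ) + (-M) * ((n - k : ℕ):ℝ) ^ β)
            + ((if k = n then B else 0) + (if k = 0 then D else 0)) := by
          intro k hk
          rcases eq_or_ne k n with rfl | hkn
          · have hne : k ≠ 0 := by omega
            rw [if_pos rfl, if_neg hne, Nat.sub_self]
            simp only [Nat.cast_zero]
            rw [Real.zero_rpow hβ0.ne']
            have hfB : |f 1 0| ≤ B := le_of_le_of_eq (hfG 1 0) hBdef.symm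
            linarith
          · rcases eq_or_ne k 0 with rfl | hk0
            · rw [if_neg hkn, if_pos rfl, Nat.sub_zero]
              linarith [hfG 1 n, hDdef, hψndef]
            · rw [if_neg hkn, if_neg hk0]
              have hm1 : 1 ≤ n - k := by omega
              have hmln : n - k < n := by omega
              linarith [IH (n - k) hmln hm1, hfG 1 (n - k)]
        -- evaluate the bounding expectations
        have hev1 : binomExp p n (fun k => (K * (k:ℝ) + (-M) * (k:ℝ) ^ β)
            + ((if k = 0 then B else 0) + (if k = n then D else 0)))
            = (K * ((n:ℝ) * p) + (-M) * binomExp p n (fun k => (k:ℝ) ^ β))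
              + ((1 - p) ^ n * B + p ^ n * D) := by
          rw [binomExp_add, binomExp_add, binomExp_add, binomExp_smul, binomExp_smul, binomExp_id,
            binomExp_ite_zero, binomExp_ite_top]
        have hev2 : binomExp p n (fun k => (K * ((n - k : ℕ):ℝ) + (-M) * ((n - k : ℕ):ℝ) ^ β)
            + ((if k = n then B else 0) + (if k = 0 then D else 0)))
            = (K * ((n:ℝ) - n * p) + (-M) * binomExp p n (fun k => ((n - k : ℕ):ℝ) ^ β))
              + (p ^ n * B + (1 - p) ^ n * D) := by
          rw [binomExp_add, binomExp_add, binomExp_add, binomExp_smul, binomExp_smul, binomExp_rev_id,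
            binomExp_ite_top, binomExp_ite_zero]
        have hb1 : |binomExp p n (f 0)|
            ≤ (K * ((n:ℝ) * p) + (-M) * binomExp p n (fun k => (k:ℝ) ^ β))
              + ((1 - p) ^ n * B + p ^ n * D) := by
          rw [← hev1]
          exact le_trans (abs_binomExp_le hp0.le hp1.le n (f 0))
            (binomExp_mono hp0.le hp1.le hpt1)
        have hb2 : |binomExp p n (fun k => f 1 (n - k))|
            ≤ (K * ((n:ℝ) - n * p) + (-M) * binomExp p n (fun k => ((n - k : ℕ):ℝ) ^ β))
              + (p ^ n * B + (1 - p) ^ n * D) := by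
          rw [← hev2]
          exact le_trans (abs_binomExp_le hp0.le hp1.le n (fun k => f 1 (n - k)))
            (binomExp_mono hp0.le hp1.le hpt2)
        -- combine rpow expectations
        have hEsum : (1 + δ) * (n:ℝ) ^ β
            ≤ binomExp p n (fun k => (k:ℝ) ^ β) + binomExp p n (fun k => ((n - k : ℕ):ℝ) ^ β) := by
          have hg := hgain i n hnN'
          rw [← hpdef] at hg
          rw [← binomExp_add]
          exact hg
        -- endpoint weights
        have hs : p ^ n + (1 - p) ^ n ≤ 1 - ρ := by
          have h1 : p ^ n ≤ p ^ 2 := pow_le_pow_of_le_one hp0.le hp1.le hn2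
          have h2 : (1 - p) ^ n ≤ (1 - p) ^ 2 := pow_le_pow_of_le_one hq0.le (by linarith) hn2
          have h3 : ρ ≤ 2 * p * (1 - p) := by rw [hpdef]; exact hρle i
          have e : p^2 + (1-p)^2 = 1 - 2*p*(1-p) := by ring
          linarith
        have hs1 : p ^ n + (1 - p) ^ n ≤ 1 := le_trans hs (by linarith)
        have hη' := hη i n hn1
        have hrec' := hrec i n hn1
        rw [← hpdef] at hrec'
        have htri : |f i n| ≤ |binomExp p n (f 0)| + |binomExp p n (fun k => f 1 (n - k))|
            + |η i n| := by
          rw [hrec']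
          have t1 := abs_add_le (binomExp p n (f 0) + binomExp p n (fun k => f 1 (n - k))) (η i n)
          have t2 := abs_add_le (binomExp p n (f 0)) (binomExp p n (fun k => f 1 (n - k)))
          linarith
        have hMD : (-M) * binomExp p n (fun k => (k:ℝ) ^ β)
            + (-M) * binomExp p n (fun k => ((n - k : ℕ):ℝ) ^ β)
            ≤ -(M * (1 + δ) * (n:ℝ) ^ β) := by
          nlinarith [hEsum, hM.le]
        have hsB : (p ^ n + (1 - p) ^ n) * B ≤ 1 * B := mul_le_mul_of_nonneg_right hs1 hB
        have hsD : (p ^ n + (1 - p) ^ n) * D ≤ (1 - ρ) * D :=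
          mul_le_mul_of_nonneg_right hs hD0.le
        linarith [htri, hb1, hb2, hη', hMD, hsB, hsD]
      -- combine components
      have hGn : G n ≤ K * n - M * (1 + δ) * (n:ℝ) ^ β + B + (1 - ρ) * D + A * (n:ℝ) ^ γ := by
        rw [hGdef]
        exact max_le (hcomp 0) (hcomp 1)
      have hγle : (n:ℝ) ^ γ ≤ (n:ℝ) ^ β :=
        Real.rpow_le_rpow_of_exponent_le (by exact_mod_cast hn1) hγβ.le
      have hMδρ : A + B + 1 ≤ M * (δ * ρ) := by
        rw [hMdef, div_mul_cancel₀]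
        positivity
      exfalso
      have h1 : ρ * D ≤ -(M * δ) * (n:ℝ) ^ β + B + A * (n:ℝ) ^ γ := by
        linarith [hGn, hDdef, hψndef]
      have h6 : M * (δ * ρ) ≤ M * δ := by nlinarith [hM.le, hδ.le, hρ1, hρ0.le]
      have h7 : A + B + 1 ≤ M * δ := le_trans hMδρ h6
      have h8 : (A + B + 1) * (n:ℝ) ^ β ≤ M * δ * (n:ℝ) ^ β :=
        mul_le_mul_of_nonneg_right h7 (by positivity)
      have h9 : A * (n:ℝ) ^ γ ≤ A * (n:ℝ) ^ β := mul_le_mul_of_nonneg_left hγle hA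
      have h10 : B ≤ B * (n:ℝ) ^ β := by nlinarith [hnβ1, hB]
      have h11 : 0 < ρ * D := mul_pos hρ0 hD0
      nlinarith [h1, h8, h9, h10, h11, hnβ1]
    -- end induction
  refine ⟨K, fun i n hn => ?_⟩
  have h1 := main n hn
  have h2 := hfG i n
  have hn0 : (1:ℝ) ≤ n := by exact_mod_cast hn
  have hnβ : (0:ℝ) ≤ (n:ℝ) ^ β := by positivity
  have : (0:ℝ) ≤ M * (n:ℝ)^β := by positivity
  linarith


lemma defect_bound {p : ℝ} (hp0 : 0 < p) (hp1 : p < 1) {n : ℕ} (hn : 1 ≤ n) :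
    |binomExp p n (fun k => (k : ℝ) * Real.log k)
      + binomExp p n (fun k => ((n - k : ℕ) : ℝ) * Real.log ((n - k : ℕ)))
      - (n : ℝ) * Real.log n + (-(p * Real.log p) - (1 - p) * Real.log (1 - p)) * n| ≤ 1 := by
  obtain ⟨hl1, hu1⟩ := Elog_sandwich hp0 hp1 hn
  obtain ⟨hl2, hu2⟩ := Elog_rev_sandwich hp0 hp1 hn
  have hn0 : (0:ℝ) < n := by exact_mod_cast hn
  have e1 : Real.log ((n:ℝ) * p) = Real.log n + Real.log p :=
    Real.log_mul hn0.ne' hp0.ne'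
  have e2 : Real.log ((n:ℝ) * (1 - p)) = Real.log n + Real.log (1 - p) :=
    Real.log_mul hn0.ne' (by linarith)
  rw [e1] at hl1 hu1
  rw [e2] at hl2 hu2
  rw [abs_le]
  constructor <;> nlinarith [hl1, hu1, hl2, hu2]


end BinomAux

lemma fin2cases (i : Fin 2) : i = 0 ∨ i = 1 := by
  fin_cases i
  · exact Or.inl rfl
  · exact Or.inr rfl

open BinomAux in
theorem stmt1 (p : Fin 2 → Fin 2 → ℝ)
    (hp : ∀ i j, p i j ∈ Set.Ioo (0 : ℝ) 1)
    (hsum : ∀ i, p i 0 + p i 1 = 1)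
    (pi' H' : Fin 2 → ℝ) (H : ℝ)
    (hpi0 : pi' 0 = p 1 0 / (p 0 1 + p 1 0))
    (hpi1 : pi' 1 = p 0 1 / (p 0 1 + p 1 0))
    (hH' : ∀ i, H' i = -(p i 0 * Real.log (p i 0)) - p i 1 * Real.log (p i 1))
    (hH : H = pi' 0 * H' 0 + pi' 1 * H' 1) (hHpos : 0 < H)
    (a ε : Fin 2 → ℕ → ℝ) (c : Fin 2 → ℝ) (α : ℝ) (hα : α < 1)
    (hrec : ∀ i : Fin 2, ∀ n : ℕ, 1 ≤ n →
      a i n = binomExp (p i 0) n (a 0) + binomExp (p i 0) n (fun k => a 1 (n - k)) + ε i n)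
    (hε : ∀ i : Fin 2,
      (fun n : ℕ => ε i n - c i * n) =O[atTop] (fun n : ℕ => (n : ℝ) ^ α)) :
    ∀ i : Fin 2,
      (fun n : ℕ => a i n - (pi' 0 * c 0 + pi' 1 * c 1) / H * ((n : ℝ) * Real.log n))
        =O[atTop] (fun n : ℕ => (n : ℝ)) := by
  have hq : ∀ i, p i 1 = 1 - p i 0 := fun i => by linarith [hsum i]
  have hp10 : 0 < p 1 0 := (hp 1 0).1
  have hp01 : 0 < p 0 1 := (hp 0 1).1
  set C : ℝ := (pi' 0 * c 0 + pi' 1 * c 1) / H with hCdef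
  have hCH : C * H = pi' 0 * c 0 + pi' 1 * c 1 := by
    rw [hCdef]; field_simp
  have key : p 1 0 * (c 0 - C * H' 0) + p 0 1 * (c 1 - C * H' 1) = 0 := by
    have hS : (0:ℝ) < p 0 1 + p 1 0 := by linarith
    have h1 : (p 0 1 + p 1 0) * (pi' 0 * c 0 + pi' 1 * c 1)
        = p 1 0 * c 0 + p 0 1 * c 1 := by
      rw [hpi0, hpi1]; field_simp
    have h2 : (p 0 1 + p 1 0) * H = p 1 0 * H' 0 + p 0 1 * H' 1 := by
      rw [hH, hpi0, hpi1]; field_simp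
    have h3 : p 1 0 * c 0 + p 0 1 * c 1 = C * (p 1 0 * H' 0 + p 0 1 * H' 1) := by
      rw [← h1, ← h2, ← hCH]; ring
    linear_combination h3
  set t : ℝ := (c 1 - C * H' 1) / p 1 0 with htdef
  have hb1 : p 1 0 * t = c 1 - C * H' 1 := by
    rw [htdef]; field_simp
  have hb0 : (1 - p 0 0) * t = -(c 0 - C * H' 0) := by
    have hq0 : (1:ℝ) - p 0 0 = p 0 1 := by linarith [hsum 0]
    rw [hq0]
    have h4 : p 1 0 * (p 0 1 * t) = p 1 0 * (-(c 0 - C * H' 0)) := by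
      have h5 : p 1 0 * (p 0 1 * t) = p 0 1 * (p 1 0 * t) := by ring
      rw [h5, hb1]; linarith [key]
    exact mul_left_cancel₀ hp10.ne' h4
  clear_value t C
  set b : Fin 2 → ℝ := fun i => if i = 0 then 0 else t with hbdef
  have hb0v : b 0 = 0 := by rw [hbdef]; norm_num
  have hb1v : b 1 = t := by rw [hbdef]; norm_num
  clear_value b
  set f : Fin 2 → ℕ → ℝ :=
    fun i n => a i n - (C * ((n : ℝ) * Real.log n) + b i * n) with hfdef
  set η : Fin 2 → ℕ → ℝ := fun i n =>
    f i n - binomExp (p i 0) n (f 0) - binomExp (p i 0) n (fun k => f 1 (n - k)) with hηdef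
  have hfrec : ∀ i n, 1 ≤ n → f i n = binomExp (p i 0) n (f 0)
      + binomExp (p i 0) n (fun k => f 1 (n - k)) + η i n := by
    intro i n _
    simp only [hηdef]
    ring
  have hηeq : ∀ (i : Fin 2) (n : ℕ), 1 ≤ n → η i n = (ε i n - c i * n)
      + C * (binomExp (p i 0) n (fun k => (k:ℝ) * Real.log k)
          + binomExp (p i 0) n (fun k => ((n - k : ℕ):ℝ) * Real.log ((n - k : ℕ)))
          - (n:ℝ) * Real.log n + H' i * n) := by
    intro i n hn
    have e0 : binomExp (p i 0) n (f 0) = binomExp (p i 0) n (a 0)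
        + (-1) * (C * binomExp (p i 0) n (fun k => (k:ℝ) * Real.log k)
            + b 0 * ((n:ℝ) * p i 0)) := by
      have h1 : binomExp (p i 0) n (f 0) = binomExp (p i 0) n
          (fun k => 1 * a 0 k + (-1) * (C * ((k:ℝ) * Real.log k) + b 0 * (k:ℝ))) :=
        binomExp_congr (fun k _ => by simp only [hfdef]; ring)
      rw [h1, binomExp_lincomb, binomExp_lincomb, binomExp_id, one_mul]
    have e1 : binomExp (p i 0) n (fun k => f 1 (n - k))
        = binomExp (p i 0) n (fun k => a 1 (n - k))
        + (-1) * (C * binomExp (p i 0) n (fun k => ((n - k : ℕ):ℝ) * Real.log ((n - k : ℕ)))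
            + b 1 * ((n:ℝ) - n * p i 0)) := by
      have h1 : binomExp (p i 0) n (fun k => f 1 (n - k)) = binomExp (p i 0) n
          (fun k => 1 * a 1 (n - k)
            + (-1) * (C * (((n - k : ℕ):ℝ) * Real.log ((n - k : ℕ))) + b 1 * ((n - k : ℕ):ℝ))) :=
        binomExp_congr (fun k _ => by simp only [hfdef]; ring)
      rw [h1, binomExp_lincomb, binomExp_lincomb, binomExp_rev_id, one_mul]
    simp only [hηdef]
    rw [e0, e1]
    simp only [hfdef]
    rw [hrec i n hn]
    have hq00 : (1:ℝ) - p 0 0 = p 0 1 := by linarith [hsum 0]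
    have hq10 : (1:ℝ) - p 1 0 = p 1 1 := by linarith [hsum 1]
    rcases fin2cases i with rfl | rfl
    · simp only [hb0v, hb1v]
      linear_combination (n:ℝ) * hb0
    · simp only [hb0v, hb1v]
      linear_combination (-(n:ℝ)) * hb1
  -- bounds on η
  set γ : ℝ := max α 0 with hγdef
  have hγ0 : 0 ≤ γ := le_max_right _ _
  have hγ1 : γ < 1 := by rw [hγdef]; exact max_lt hα one_pos
  have hαγ : α ≤ γ := le_max_left _ _
  obtain ⟨A0, hA0⟩ := isBigO_iff.mp (hε 0)
  obtain ⟨A1, hA1⟩ := isBigO_iff.mp (hε 1)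
  rw [eventually_atTop] at hA0 hA1
  obtain ⟨N0, hN0⟩ := hA0
  obtain ⟨N1, hN1⟩ := hA1
  set Nε : ℕ := max (max N0 N1) 1 with hNεdef
  set A : ℝ := |A0| + |A1| + |C| + 1 + (∑ m ∈ Finset.range Nε, (|η 0 m| + |η 1 m|)) with hAdef
  have hsumnn : 0 ≤ ∑ m ∈ Finset.range Nε, (|η 0 m| + |η 1 m|) :=
    Finset.sum_nonneg fun m _ => by positivity
  have hAnn : 0 ≤ A := by
    rw [hAdef]
    have := abs_nonneg A0; have := abs_nonneg A1; have := abs_nonneg C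
    linarith
  have hAge : |A0| + |A1| + |C| + 1 ≤ A := by rw [hAdef]; linarith
  have hηb : ∀ (i : Fin 2) (n : ℕ), 1 ≤ n → |η i n| ≤ A * (n:ℝ) ^ γ := by
    intro i n hn
    have hn0 : (0:ℝ) < n := by exact_mod_cast hn
    have hnγ1 : (1:ℝ) ≤ (n:ℝ) ^ γ := Real.one_le_rpow (by exact_mod_cast hn) hγ0
    have hnγ0 : (0:ℝ) ≤ (n:ℝ) ^ γ := by positivity
    rcases lt_or_ge n Nε with hlt | hge
    · have h1 : |η i n| ≤ |η 0 n| + |η 1 n| := by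
        rcases fin2cases i with rfl | rfl
        · linarith [abs_nonneg (η 1 n)]
        · linarith [abs_nonneg (η 0 n)]
      have h2 : |η 0 n| + |η 1 n| ≤ ∑ m ∈ Finset.range Nε, (|η 0 m| + |η 1 m|) :=
        Finset.single_le_sum (f := fun m => |η 0 m| + |η 1 m|)
          (fun m _ => by positivity) (Finset.mem_range.mpr hlt)
      have h3 : |η i n| ≤ A := by
        rw [hAdef]
        have := abs_nonneg A0; have := abs_nonneg A1; have := abs_nonneg C
        linarith
      calc |η i n| ≤ A * 1 := by linarith
        _ ≤ A * (n:ℝ) ^ γ := mul_le_mul_of_nonneg_left hnγ1 hAnn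
    · -- large n : use hηeq + defect bound + ε bound
      have hdef := defect_bound (hp i 0).1 (hp i 0).2 hn
      have hH'i : H' i = -(p i 0 * Real.log (p i 0)) - (1 - p i 0) * Real.log (1 - p i 0) := by
        rw [hH' i, hq i]
      rw [← hH'i] at hdef
      have hnα0 : (0:ℝ) ≤ (n:ℝ) ^ α := Real.rpow_nonneg hn0.le α
      have hαγ' : (n:ℝ) ^ α ≤ (n:ℝ) ^ γ :=
        Real.rpow_le_rpow_of_exponent_le (by exact_mod_cast hn) hαγ
      have hεb : |ε i n - c i * n| ≤ (|A0| + |A1|) * (n:ℝ) ^ γ := by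
        have hnαn : ‖(n:ℝ) ^ α‖ = (n:ℝ) ^ α := by
          rw [Real.norm_eq_abs]; exact abs_of_nonneg hnα0
        have hge0 : N0 ≤ n := le_trans (le_trans (le_max_left N0 N1) (le_max_left _ 1)) hge
        have hge1 : N1 ≤ n := le_trans (le_trans (le_max_right N0 N1) (le_max_left _ 1)) hge
        rcases fin2cases i with rfl | rfl
        · have h5 := hN0 n hge0
          rw [Real.norm_eq_abs, hnαn] at h5
          have h6 : A0 * (n:ℝ) ^ α ≤ |A0| * (n:ℝ) ^ γ := by
            calc A0 * (n:ℝ) ^ α ≤ |A0| * (n:ℝ) ^ α :=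
              mul_le_mul_of_nonneg_right (le_abs_self A0) hnα0
              _ ≤ |A0| * (n:ℝ) ^ γ := mul_le_mul_of_nonneg_left hαγ' (abs_nonneg A0)
          have h7 : 0 ≤ |A1| * (n:ℝ) ^ γ := mul_nonneg (abs_nonneg A1) hnγ0
          have h8 : (|A0| + |A1|) * (n:ℝ) ^ γ = |A0| * (n:ℝ)^γ + |A1| * (n:ℝ)^γ := by ring
          linarith
        · have h5 := hN1 n hge1
          rw [Real.norm_eq_abs, hnαn] at h5
          have h6 : A1 * (n:ℝ) ^ α ≤ |A1| * (n:ℝ) ^ γ := by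
            calc A1 * (n:ℝ) ^ α ≤ |A1| * (n:ℝ) ^ α :=
              mul_le_mul_of_nonneg_right (le_abs_self A1) hnα0
              _ ≤ |A1| * (n:ℝ) ^ γ := mul_le_mul_of_nonneg_left hαγ' (abs_nonneg A1)
          have h7 : 0 ≤ |A0| * (n:ℝ) ^ γ := mul_nonneg (abs_nonneg A0) hnγ0
          have h8 : (|A0| + |A1|) * (n:ℝ) ^ γ = |A0| * (n:ℝ)^γ + |A1| * (n:ℝ)^γ := by ring
          linarith
      have hsplit : |η i n| ≤ |ε i n - c i * n| + |C| * 1 := by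
        rw [hηeq i n hn]
        calc |(ε i n - c i * n)
            + C * (binomExp (p i 0) n (fun k => (k:ℝ) * Real.log k)
              + binomExp (p i 0) n (fun k => ((n - k : ℕ):ℝ) * Real.log ((n - k : ℕ)))
              - (n:ℝ) * Real.log n + H' i * n)|
            ≤ |ε i n - c i * n| + |C * (binomExp (p i 0) n (fun k => (k:ℝ) * Real.log k)
              + binomExp (p i 0) n (fun k => ((n - k : ℕ):ℝ) * Real.log ((n - k : ℕ)))
              - (n:ℝ) * Real.log n + H' i * n)| := abs_add_le _ _
          _ ≤ |ε i n - c i * n| + |C| * 1 := by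
              rw [abs_mul]
              have h9 := mul_le_mul_of_nonneg_left hdef (abs_nonneg C)
              linarith
      have h10 : |C| * 1 ≤ |C| * (n:ℝ) ^ γ := mul_le_mul_of_nonneg_left hnγ1 (abs_nonneg C)
      have h11 : (|A0| + |A1| + |C|) * (n:ℝ) ^ γ ≤ A * (n:ℝ) ^ γ := by
        apply mul_le_mul_of_nonneg_right _ hnγ0
        linarith
      have h12 : (|A0| + |A1| + |C|) * (n:ℝ) ^ γ
          = (|A0| + |A1|) * (n:ℝ)^γ + |C| * (n:ℝ)^γ := by ring
      linarith
  obtain ⟨K, hK⟩ := core (P := fun i => p i 0) (fun i => (hp i 0).1) (fun i => (hp i 0).2)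
    f η γ hγ0 hγ1 A hAnn hfrec hηb
  intro i
  rw [isBigO_iff]
  refine ⟨K + |b 0| + |b 1|, ?_⟩
  filter_upwards [eventually_ge_atTop 1] with n hn
  have h1 := hK i n hn
  have hbn : |b i| ≤ |b 0| + |b 1| := by
    rcases fin2cases i with rfl | rfl
    · linarith [abs_nonneg (b 1)]
    · linarith [abs_nonneg (b 0)]
  have hn0 : (1:ℝ) ≤ (n:ℝ) := by exact_mod_cast hn
  have heq : a i n - C * ((n:ℝ) * Real.log n) = f i n + b i * n := by
    simp only [hfdef]; ring
  rw [Real.norm_eq_abs, Real.norm_eq_abs, heq]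
  have h2 : |f i n + b i * n| ≤ |f i n| + |b i| * n := by
    have h3 := abs_add_le (f i n) (b i * n)
    rw [abs_mul, Nat.abs_cast] at h3
    exact h3
  have h4 : |(n:ℝ)| = (n:ℝ) := abs_of_nonneg (by positivity)
  rw [h4]
  have h5 : |b i| * (n:ℝ) ≤ (|b 0| + |b 1|) * n :=
    mul_le_mul_of_nonneg_right hbn (by positivity)
  have h6 : (K + |b 0| + |b 1|) * (n:ℝ) = K * n + (|b 0| + |b 1|) * n := by ring
  linarith
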